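/- BPDL is not compact: every finite subset of the set M = {⟨α*⟩φ} ∪ {¬φ} ∪ {¬⟨αⁿ⟩φ : n ∈ ℕ} is satisfiable in some standard dynamic Odintsov–Wansing model (for suitable atomic α and φ), but M itself is not satisfiable in any standard dynamic Odintsov–Wansing model. -/
import Mathlib


mutual
inductive DynProg : Type where
  | atom : ℕ → DynProg
  | seq : DynProg → DynProg → DynProg
  | union : DynProg → DynProg → DynProg
  | star : DynProg → DynProg
  | test : DynForm → DynProg
inductive DynForm : Type where
  | atom : ℕ → DynForm
  | bot  : DynForm
  | snot : DynForm → DynForm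
  | and  : DynForm → DynForm → DynForm
  | or   : DynForm → DynForm → DynForm
  | imp  : DynForm → DynForm → DynForm
  | box  : DynProg → DynForm → DynForm
  | dia  : DynProg → DynForm → DynForm
end

def DynForm.neg (φ : DynForm) : DynForm := .imp φ .bot

def DynForm.biimp (φ ψ : DynForm) : DynForm := .and (.imp φ ψ) (.imp ψ φ)

structure DynModel : Type 1 where
  S : Type
  ne : Nonempty S
  Ra : ℕ → S → S → Prop
  Vp : ℕ → S → Prop
  Vm : ℕ → S → Prop

mutual
def progRel (M : DynModel) : DynProg → M.S → M.S → Prop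
  | .atom a, x, y => M.Ra a x y
  | .seq α β, x, z => ∃ y, progRel M α x y ∧ progRel M β y z
  | .union α β, x, y => progRel M α x y ∨ progRel M β x y
  | .star α, x, y => Relation.ReflTransGen (fun u v => progRel M α u v) x y
  | .test φ, x, y => x = y ∧ dverify M x φ
def dverify (M : DynModel) : M.S → DynForm → Prop
  | x, .atom p => M.Vp p x
  | _, .bot => False
  | x, .snot φ => dfalsify M x φ
  | x, .and φ ψ => dverify M x φ ∧ dverify M x ψ
  | x, .or φ ψ => dverify M x φ ∨ dverify M x ψ
  | x, .imp φ ψ => dverify M x φ → dverify M x ψ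
  | x, .box α φ => ∀ y, progRel M α x y → dverify M y φ
  | x, .dia α φ => ∃ y, progRel M α x y ∧ dverify M y φ
def dfalsify (M : DynModel) : M.S → DynForm → Prop
  | x, .atom p => M.Vm p x
  | _, .bot => True
  | x, .snot φ => dverify M x φ
  | x, .and φ ψ => dfalsify M x φ ∨ dfalsify M x ψ
  | x, .or φ ψ => dfalsify M x φ ∧ dfalsify M x ψ
  | x, .imp φ ψ => dverify M x φ ∧ dfalsify M x ψ
  | x, .box α φ => ∃ y, progRel M α x y ∧ dfalsify M y φ
  | x, .dia α φ => ∀ y, progRel M α x y → dfalsify M y φ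
end

def validIn (M : DynModel) (φ : DynForm) : Prop := ∀ x : M.S, dverify M x φ

def DynValid (φ : DynForm) : Prop := ∀ M : DynModel, validIn M φ

def DynProg.pow (α : DynProg) : ℕ → DynProg
  | 0 => .test (DynForm.neg .bot)
  | n+1 => .seq (α.pow n) α

def badSet (α : DynProg) (φ : DynForm) : Set DynForm :=
  {DynForm.dia (.star α) φ, DynForm.neg φ} ∪
    {ψ | ∃ n : ℕ, ψ = DynForm.neg (.dia (α.pow n) φ)}

def powLen : DynProg → ℕ
  | .seq β _ => powLen β + 1
  | _ => 0

lemma powLen_pow (α : DynProg) (n : ℕ) : powLen (α.pow n) = n := by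
  induction n with
  | zero => rfl
  | succ n ih => simp [DynProg.pow, powLen, ih]

def idx : DynForm → ℕ
  | .imp (.dia β _) _ => powLen β
  | _ => 0

lemma rtg_to_pow (M : DynModel) (β : DynProg) {x y : M.S}
    (h : Relation.ReflTransGen (fun u v => progRel M β u v) x y) :
    ∃ n, progRel M (β.pow n) x y := by
  induction h with
  | refl =>
      refine ⟨0, rfl, ?_⟩
      show dverify M x (DynForm.imp .bot .bot)
      simp [dverify]
  | tail _ hstep ih =>
      obtain ⟨n, hn⟩ := ih
      exact ⟨n + 1, _, hn, hstep⟩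

def chainM (N p : ℕ) : DynModel :=
  ⟨ℕ, ⟨0⟩, fun _ x y => y = x + 1, fun _ x => x = N + 1, fun _ _ => False⟩

lemma chain_pow (N p a n : ℕ) : ∀ x y : ℕ,
    progRel (chainM N p) ((DynProg.atom a).pow n) x y → y = x + n := by
  induction n with
  | zero => intro x y h; exact h.1 ▸ rfl
  | succ n ih =>
      rintro x y ⟨z, hz, hy⟩
      have h1 := ih x z hz
      exact hy.trans (by rw [h1]; exact Nat.add_assoc x n 1)

lemma rtg_succ (k : ℕ) :
    Relation.ReflTransGen (fun u v : ℕ => v = u + 1) 0 k := by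
  induction k with
  | zero => exact Relation.ReflTransGen.refl
  | succ k ih => exact ih.tail rfl

theorem stmt15 (α : DynProg) (φ : DynForm) (hα : ∃ a, α = .atom a)
    (hφ : ∃ p, φ = .atom p) :
    (∀ F : Finset DynForm, ↑F ⊆ badSet α φ →
        ∃ (M : DynModel) (x : M.S), ∀ ψ ∈ F, dverify M x ψ) ∧
    ¬ ∃ (M : DynModel) (x : M.S), ∀ ψ ∈ badSet α φ, dverify M x ψ := by
  obtain ⟨a, rfl⟩ := hα
  obtain ⟨p, rfl⟩ := hφ
  constructor
  · intro F hF
    refine ⟨chainM (F.sup idx) p, (0 : ℕ), ?_⟩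
    intro ψ hψ
    have hmem := hF hψ
    simp only [badSet, Set.mem_union, Set.mem_insert_iff, Set.mem_singleton_iff,
      Set.mem_setOf_eq] at hmem
    rcases hmem with (rfl | rfl) | ⟨n, rfl⟩
    · -- dia star
      refine ⟨((F.sup idx + 1 : ℕ) : (chainM (F.sup idx) p).S), ?_, rfl⟩
      exact rtg_succ (F.sup idx + 1)
    · -- neg φ
      intro h
      have : (0 : ℕ) = F.sup idx + 1 := h
      omega
    · -- neg dia pow n
      rintro ⟨y, hy, hv⟩
      have h1 := chain_pow (F.sup idx) p a n 0 y hy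
      have hkey : (0 + n : ℕ) = F.sup idx + 1 := h1.symm.trans hv
      have h3 : idx (DynForm.neg (.dia ((DynProg.atom a).pow n) (.atom p))) ≤ F.sup idx :=
        Finset.le_sup hψ
      simp only [idx, DynForm.neg, powLen_pow] at h3
      omega
  · rintro ⟨M, x, H⟩
    have h1 : dverify M x (DynForm.dia (.star (DynProg.atom a)) (.atom p)) :=
      H _ (Or.inl (Or.inl rfl))
    obtain ⟨y, hy, hv⟩ := h1
    obtain ⟨n, hn⟩ := rtg_to_pow M (DynProg.atom a) hy
    exact H _ (Or.inr ⟨n, rfl⟩) ⟨y, hn, hv⟩
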